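/- In the lamplighter group with generators {a,t}, for any element g = (c,k): any word in the generators representing g, read as a walk of the cursor starting at 0, must visit every position in supp(c); consequently the word length of (c,k) is at least the length of the shortest walk on ℤ starting at 0, ending at k, and visiting all points of supp(c), plus |supp(c)|. -/

import Mathlib

noncomputable section

/-- The shift automorphism of the base group `ℤ →₀ ZMod 2`. -/
def lampShift : (ℤ →₀ ZMod 2) ≃+ (ℤ →₀ ZMod 2) :=
  Finsupp.domCongr (Equiv.addRight (1 : ℤ))

/-- The action of `ℤ` on the base group by shifting. -/
def lampAct : Multiplicative ℤ →* MulAut (Multiplicative (ℤ →₀ ZMod 2)) :=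
  zpowersHom _ (AddEquiv.toMultiplicative lampShift)

/-- The lamplighter group `ℤ/2 ≀ ℤ`. -/
abbrev Lamp : Type :=
  (Multiplicative (ℤ →₀ ZMod 2)) ⋊[lampAct] (Multiplicative ℤ)

/-- The element `a = (δ₀, 0)`. -/
def lampA : Lamp := SemidirectProduct.inl (Multiplicative.ofAdd (Finsupp.single (0 : ℤ) (1 : ZMod 2)))

/-- The element `t = (0, 1)`. -/
def lampT : Lamp := SemidirectProduct.inr (Multiplicative.ofAdd (1 : ℤ))

/-- The element `(c, k)` of the lamplighter group. -/
def lampElt (c : ℤ →₀ ZMod 2) (k : ℤ) : Lamp :=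
  SemidirectProduct.inl (Multiplicative.ofAdd c) * SemidirectProduct.inr (Multiplicative.ofAdd k)

/-- Word length with respect to a generating set `S` (inverses allowed). -/
def wordLength {G : Type*} [Group G] (S : Set G) (g : G) : ℕ :=
  sInf {n | ∃ l : List G, l.length = n ∧ (∀ x ∈ l, x ∈ S ∨ x⁻¹ ∈ S) ∧ l.prod = g}

/-- Word metric. -/
def wordDist {G : Type*} [Group G] (S : Set G) (g h : G) : ℕ :=
  wordLength S (g⁻¹ * h)

end

noncomputable section

/-- The cursor (the `ℤ`-coordinate) of an element of the lamplighter group. -/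
def cursor (g : Lamp) : ℤ := Multiplicative.toAdd (SemidirectProduct.rightHom g)

/-- The minimal length of a walk on `ℤ` starting at `0`, ending at `k`, and
visiting every point of `supp c`. -/
def minWalkLength (c : ℤ →₀ ZMod 2) (k : ℤ) : ℕ :=
  sInf {n | ∃ w : List ℤ, w.length = n + 1 ∧ w.head? = some 0 ∧
    w.getLast? = some k ∧ List.Chain' (fun p q => (q - p).natAbs = 1) w ∧
    ∀ i ∈ c.support, i ∈ w}

open Multiplicative

private lemma lampAct_pone (c : ℤ →₀ ZMod 2) (i : ℤ) :
    Multiplicative.toAdd (lampAct (ofAdd (1:ℤ)) (ofAdd c)) i = c (i - 1) := by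
  simp [lampAct, lampShift, Finsupp.domCongr, sub_eq_add_neg]

private lemma lampAct_negone (c : ℤ →₀ ZMod 2) (i : ℤ) :
    Multiplicative.toAdd (lampAct (ofAdd (-1:ℤ)) (ofAdd c)) i = c (i + 1) := by
  simp [lampAct, lampShift, Finsupp.domCongr, MulAut.inv_def]

private lemma lampAct_apply (n : ℤ) (c : ℤ →₀ ZMod 2) (i : ℤ) :
    Multiplicative.toAdd (lampAct (ofAdd n) (ofAdd c)) i = c (i - n) := by
  induction n using Int.induction_on generalizing i with
  | zero => simp [lampAct]
  | succ n ih =>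
      have h : (ofAdd ((n:ℤ)+1)) = ofAdd (1:ℤ) * ofAdd (n:ℤ) := by
        rw [← ofAdd_add]; ring_nf
      rw [h, map_mul]
      simp only [MulAut.mul_apply]
      rw [show lampAct (ofAdd (n:ℤ)) (ofAdd c) = ofAdd (toAdd (lampAct (ofAdd (n:ℤ)) (ofAdd c))) by simp]
      rw [lampAct_pone, ih]; ring_nf
  | pred n ih =>
      have h : (ofAdd (-(n:ℤ)-1)) = ofAdd (-1:ℤ) * ofAdd (-(n:ℤ)) := by
        rw [← ofAdd_add]; ring_nf
      rw [h, map_mul]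
      simp only [MulAut.mul_apply]
      rw [show lampAct (ofAdd (-(n:ℤ))) (ofAdd c) = ofAdd (toAdd (lampAct (ofAdd (-(n:ℤ))) (ofAdd c))) by simp]
      rw [lampAct_negone, ih]; ring_nf

/-- The lamp configuration of an element. -/
private def conf (g : Lamp) : ℤ →₀ ZMod 2 := Multiplicative.toAdd g.left

private lemma cursor_mul (x y : Lamp) : cursor (x * y) = cursor x + cursor y := by
  simp [cursor, map_mul]

private lemma cursor_one : cursor 1 = 0 := by simp [cursor]

private lemma cursor_lampA : cursor lampA = 0 := by simp [cursor, lampA]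
private lemma cursor_lampT : cursor lampT = 1 := by simp [cursor, lampT]
private lemma cursor_lampT_inv : cursor lampT⁻¹ = -1 := by simp [cursor, lampT]

private lemma lampA_inv : lampA⁻¹ = lampA := by
  have h : -(Finsupp.single (0:ℤ) (1:ZMod 2)) = Finsupp.single 0 1 := by
    rw [← Finsupp.single_neg]
    congr 1
  rw [lampA, ← map_inv, ← ofAdd_neg, h]

private lemma conf_mul_apply (x y : Lamp) (i : ℤ) :
    conf (x * y) i = conf x i + conf y (i - cursor x) := by
  unfold conf
  rw [SemidirectProduct.mul_left, toAdd_mul, Finsupp.add_apply]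
  congr 1
  have h1 : y.left = ofAdd (Multiplicative.toAdd y.left) := by simp
  have h2 : x.right = ofAdd (cursor x) := by
    simp [cursor, SemidirectProduct.rightHom]
  rw [h1, h2, lampAct_apply]
  simp

private lemma conf_one : conf 1 = 0 := by simp [conf]
private lemma conf_lampA : conf lampA = Finsupp.single 0 1 := by simp [conf, lampA]
private lemma conf_lampT : conf lampT = 0 := by simp [conf, lampT]
private lemma conf_lampT_inv : conf lampT⁻¹ = 0 := by
  rw [lampT, ← map_inv]; simp [conf]

private lemma conf_lampElt (c : ℤ →₀ ZMod 2) (k : ℤ) : conf (lampElt c k) = c := by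
  unfold conf lampElt
  rw [SemidirectProduct.mul_left]
  simp

private lemma cursor_lampElt (c : ℤ →₀ ZMod 2) (k : ℤ) : cursor (lampElt c k) = k := by
  simp [cursor, lampElt, map_mul]

private lemma single_shift (n i : ℤ) :
    (Finsupp.single (0:ℤ) (1:ZMod 2)) (i - n) = (Finsupp.single n (1:ZMod 2)) i := by
  rw [Finsupp.single_apply, Finsupp.single_apply]
  by_cases h : n = i
  · subst h; simp
  · rw [if_neg h, if_neg (by omega)]

private lemma master (l : List Lamp)
    (hl : ∀ x ∈ l, x = lampA ∨ x = lampA⁻¹ ∨ x = lampT ∨ x = lampT⁻¹) :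
    ∃ w : List ℤ, w.head? = some 0 ∧ w.getLast? = some (cursor l.prod) ∧
      List.Chain' (fun p q => (q - p).natAbs = 1) w ∧
      (∀ p, p <+: l → cursor p.prod ∈ w) ∧
      (∀ i ∈ (conf l.prod).support, ∃ p, p <+: l ∧ cursor p.prod = i) ∧
      w.length + (conf l.prod).support.card ≤ l.length + 1 := by
  induction l using List.reverseRecOn with
  | nil =>
      refine ⟨[0], rfl, by simp [cursor_one], List.isChain_singleton 0, ?_, ?_, ?_⟩
      · intro p hp
        rw [List.prefix_nil.mp hp]
        simp [cursor_one]
      · intro i hi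
        simp [conf_one] at hi
      · simp [conf_one]
  | append_singleton l g ih =>
      have hl' : ∀ x ∈ l, x = lampA ∨ x = lampA⁻¹ ∨ x = lampT ∨ x = lampT⁻¹ :=
        fun x hx => hl x (List.mem_append_left _ hx)
      obtain ⟨w, hw0, hwlast, hwchain, hwpre, hwsupp, hwlen⟩ := ih hl'
      have hg := hl g (List.mem_append_right _ (List.mem_singleton_self g))
      have hprod : (l ++ [g]).prod = l.prod * g := by
        rw [List.prod_append, List.prod_singleton]
      have hdich : (conf g = Finsupp.single 0 1 ∧ cursor g = 0) ∨
          (conf g = 0 ∧ (cursor g).natAbs = 1) := by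
        rcases hg with rfl | rfl | rfl | rfl
        · exact Or.inl ⟨conf_lampA, cursor_lampA⟩
        · rw [lampA_inv]; exact Or.inl ⟨conf_lampA, cursor_lampA⟩
        · exact Or.inr ⟨conf_lampT, by rw [cursor_lampT]; rfl⟩
        · exact Or.inr ⟨conf_lampT_inv, by rw [cursor_lampT_inv]; rfl⟩
      rcases hdich with ⟨hgc, hgcur⟩ | ⟨hgc, hgcur⟩
      · -- a-type letter
        have hcur : cursor ((l ++ [g]).prod) = cursor l.prod := by
          rw [hprod, cursor_mul, hgcur, add_zero]
        have hca : conf ((l ++ [g]).prod)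
            = conf l.prod + Finsupp.single (cursor l.prod) 1 := by
          ext i
          rw [hprod, conf_mul_apply, hgc, Finsupp.add_apply, single_shift]
        refine ⟨w, hw0, by rw [hcur]; exact hwlast, hwchain, ?_, ?_, ?_⟩
        · intro p hp
          rcases List.prefix_concat_iff.mp hp with rfl | hp'
          · rw [hcur]; exact hwpre l List.prefix_rfl
          · exact hwpre p hp'
        · intro i hi
          rw [hca] at hi
          rcases Finset.mem_union.mp (Finsupp.support_add hi) with h | h
          · obtain ⟨p, hp, hpc⟩ := hwsupp i h
            exact ⟨p, hp.trans (List.prefix_append l [g]), hpc⟩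
          · have hix : i = cursor l.prod := by
              have h2 := Finsupp.support_single_subset h
              simpa using h2
            exact ⟨l, List.prefix_append l [g], hix.symm⟩
        · have hsub : (conf ((l ++ [g]).prod)).support
              ⊆ (conf l.prod).support ∪ {cursor l.prod} := by
            rw [hca]
            refine Finsupp.support_add.trans (Finset.union_subset_union le_rfl ?_)
            exact Finsupp.support_single_subset
          have hcard : (conf ((l ++ [g]).prod)).support.card
              ≤ (conf l.prod).support.card + 1 := by
            calc (conf ((l ++ [g]).prod)).support.card
                ≤ ((conf l.prod).support ∪ {cursor l.prod}).card := Finset.card_le_card hsub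
              _ ≤ (conf l.prod).support.card + 1 := by
                  refine (Finset.card_union_le _ _).trans ?_
                  simp
          rw [List.length_append, List.length_singleton]
          omega
      · -- t-type letter
        have hcur : cursor ((l ++ [g]).prod) = cursor l.prod + cursor g := by
          rw [hprod, cursor_mul]
        have hca : conf ((l ++ [g]).prod) = conf l.prod := by
          ext i
          rw [hprod, conf_mul_apply, hgc]
          simp
        refine ⟨w ++ [cursor l.prod + cursor g], ?_, ?_, ?_, ?_, ?_, ?_⟩
        · rw [List.head?_append, hw0]; rfl
        · rw [List.getLast?_concat, hcur]
        · unfold List.Chain'; rw [List.isChain_append]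
          refine ⟨hwchain, List.isChain_singleton _, ?_⟩
          intro x hx y hy
          rw [hwlast] at hx
          simp only [Option.mem_some_iff, List.head?_cons] at hx hy
          subst hx; subst hy
          simp [hgcur]
        · intro p hp
          rcases List.prefix_concat_iff.mp hp with rfl | hp'
          · rw [hcur]
            exact List.mem_append_right _ (List.mem_singleton_self _)
          · exact List.mem_append_left _ (hwpre p hp')
        · intro i hi
          rw [hca] at hi
          obtain ⟨p, hp, hpc⟩ := hwsupp i hi
          exact ⟨p, hp.trans (List.prefix_append l [g]), hpc⟩
        · rw [hca, List.length_append, List.length_append]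
          simp only [List.length_singleton]
          omega

private lemma gen_t (m : ℤ) :
    ∃ l : List Lamp, (∀ x ∈ l, x ∈ ({lampA, lampT} : Set Lamp) ∨ x⁻¹ ∈ ({lampA, lampT} : Set Lamp)) ∧
      l.prod = SemidirectProduct.inr (ofAdd m) := by
  rcases le_or_gt 0 m with h | h
  · refine ⟨List.replicate m.toNat lampT, ?_, ?_⟩
    · intro x hx
      rw [List.eq_of_mem_replicate hx]
      exact Or.inl (by simp)
    · rw [List.prod_replicate, lampT, ← map_pow]
      congr 1
      rw [← ofAdd_nsmul]
      congr 1
      simp only [nsmul_eq_mul, mul_one]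
      omega
  · refine ⟨List.replicate (-m).toNat lampT⁻¹, ?_, ?_⟩
    · intro x hx
      rw [List.eq_of_mem_replicate hx]
      exact Or.inr (by simp)
    · rw [List.prod_replicate, inv_pow, lampT, ← map_pow, ← map_inv]
      congr 1
      rw [← ofAdd_nsmul, ← ofAdd_neg]
      congr 1
      simp only [nsmul_eq_mul, mul_one]
      omega

private lemma gen_single (j : ℤ) :
    ∃ l : List Lamp, (∀ x ∈ l, x ∈ ({lampA, lampT} : Set Lamp) ∨ x⁻¹ ∈ ({lampA, lampT} : Set Lamp)) ∧
      l.prod = SemidirectProduct.inl (ofAdd (Finsupp.single j (1 : ZMod 2))) := by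
  obtain ⟨l1, h1, h1p⟩ := gen_t j
  obtain ⟨l2, h2, h2p⟩ := gen_t (-j)
  refine ⟨l1 ++ [lampA] ++ l2, ?_, ?_⟩
  · intro x hx
    simp only [List.mem_append, List.mem_singleton] at hx
    rcases hx with (hx | rfl) | hx
    · exact h1 x hx
    · exact Or.inl (by simp)
    · exact h2 x hx
  · rw [List.prod_append, List.prod_append, List.prod_singleton, h1p, h2p, lampA,
      show (ofAdd (-j)) = (ofAdd j)⁻¹ from ofAdd_neg j, ← SemidirectProduct.inl_aut]
    congr 1
    have : lampAct (ofAdd j) (ofAdd (Finsupp.single (0:ℤ) (1:ZMod 2)))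
        = ofAdd (Finsupp.single j (1:ZMod 2)) := by
      rw [show lampAct (ofAdd j) (ofAdd (Finsupp.single (0:ℤ) (1:ZMod 2)))
          = ofAdd (toAdd (lampAct (ofAdd j) (ofAdd (Finsupp.single (0:ℤ) (1:ZMod 2))))) by simp]
      congr 1
      ext i
      rw [lampAct_apply, single_shift]
    rw [this]

private lemma gen_conf (c : ℤ →₀ ZMod 2) :
    ∃ l : List Lamp, (∀ x ∈ l, x ∈ ({lampA, lampT} : Set Lamp) ∨ x⁻¹ ∈ ({lampA, lampT} : Set Lamp)) ∧
      l.prod = SemidirectProduct.inl (ofAdd c) := by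
  induction c using Finsupp.induction with
  | zero => exact ⟨[], by simp, by simp⟩
  | single_add a b f ha hb ih =>
      have hb1 : b = 1 := by revert hb; revert b; decide
      subst hb1
      obtain ⟨l1, h1, h1p⟩ := gen_single a
      obtain ⟨l2, h2, h2p⟩ := ih
      refine ⟨l1 ++ l2, ?_, ?_⟩
      · intro x hx
        rcases List.mem_append.mp hx with hx | hx
        · exact h1 x hx
        · exact h2 x hx
      · rw [List.prod_append, h1p, h2p, ← map_mul, ← ofAdd_add]

private lemma gen (c : ℤ →₀ ZMod 2) (k : ℤ) :
    ∃ l : List Lamp, (∀ x ∈ l, x ∈ ({lampA, lampT} : Set Lamp) ∨ x⁻¹ ∈ ({lampA, lampT} : Set Lamp)) ∧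
      l.prod = lampElt c k := by
  obtain ⟨l1, h1, h1p⟩ := gen_conf c
  obtain ⟨l2, h2, h2p⟩ := gen_t k
  refine ⟨l1 ++ l2, ?_, ?_⟩
  · intro x hx
    rcases List.mem_append.mp hx with hx | hx
    · exact h1 x hx
    · exact h2 x hx
  · rw [List.prod_append, h1p, h2p, lampElt]


/-- any word in the generators representing `(c,k)` visits, as a
walk of the cursor, every position of `supp c`; hence the word length of
`(c,k)` is at least the minimal length of a walk on `ℤ` from `0` to `k`
visiting `supp c`, plus `|supp c|`. -/
theorem lamplighter_word_visits_support (c : ℤ →₀ ZMod 2) (k : ℤ) :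
    (∀ l : List Lamp,
      (∀ x ∈ l, x = lampA ∨ x = lampA⁻¹ ∨ x = lampT ∨ x = lampT⁻¹) →
      l.prod = lampElt c k →
      ∀ i ∈ c.support, ∃ p : List Lamp, p <+: l ∧ cursor p.prod = i) ∧
    minWalkLength c k + c.support.card ≤
      wordLength ({lampA, lampT} : Set Lamp) (lampElt c k) := by

  constructor
  · intro l hl hp i hi
    obtain ⟨w, _, _, _, _, hsupp, _⟩ := master l hl
    have hc : conf l.prod = c := by rw [hp, conf_lampElt]
    exact hsupp i (by rw [hc]; exact hi)
  · have hne : {n | ∃ l : List Lamp, l.length = n ∧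
        (∀ x ∈ l, x ∈ ({lampA, lampT} : Set Lamp) ∨ x⁻¹ ∈ ({lampA, lampT} : Set Lamp)) ∧
        l.prod = lampElt c k}.Nonempty := by
      obtain ⟨l, h1, h2⟩ := gen c k
      exact ⟨l.length, l, rfl, h1, h2⟩
    obtain ⟨l, hlen, hcond, hprod⟩ := Nat.sInf_mem hne
    have hl4 : ∀ x ∈ l, x = lampA ∨ x = lampA⁻¹ ∨ x = lampT ∨ x = lampT⁻¹ := by
      intro x hx
      rcases hcond x hx with h | h <;>
        simp only [Set.mem_insert_iff, Set.mem_singleton_iff] at h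
      · tauto
      · rcases h with h | h
        · exact Or.inr (Or.inl (by rw [← h]; simp))
        · exact Or.inr (Or.inr (Or.inr (by rw [← h]; simp)))
    obtain ⟨w, hw0, hwlast, hwchain, hwpre, hwsupp, hwlen⟩ := master l hl4
    have hcc : conf l.prod = c := by rw [hprod, conf_lampElt]
    have hck : cursor l.prod = k := by rw [hprod, cursor_lampElt]
    have hwne : w ≠ [] := by
      intro h; rw [h] at hw0; simp at hw0
    have hwlenpos : 1 ≤ w.length := List.length_pos_iff.mpr hwne
    have hmem : (w.length - 1) ∈ {n | ∃ w' : List ℤ, w'.length = n + 1 ∧ w'.head? = some 0 ∧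
        w'.getLast? = some k ∧ List.Chain' (fun p q => (q - p).natAbs = 1) w' ∧
        ∀ i ∈ c.support, i ∈ w'} := by
      refine ⟨w, by omega, hw0, by rw [← hck]; exact hwlast, hwchain, ?_⟩
      intro i hi
      obtain ⟨p, hp, hpc⟩ := hwsupp i (by rw [hcc]; exact hi)
      exact hpc ▸ hwpre p hp
    have h1 : minWalkLength c k ≤ w.length - 1 := Nat.sInf_le hmem
    have h2 : w.length + c.support.card ≤ l.length + 1 := by rw [← hcc]; exact hwlen
    rw [wordLength, ← hlen]
    omega

end
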